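/- Let n ≥ 2, R > 0, and let g : [−1,1] → ℝ be continuous. For x, y ∈ ℝ^n define F(x,y) = ∫_{B_R(x) ∩ B_R(y)} g(⟨(x−z)/|x−z|, (y−z)/|y−z|⟩) dz. Then for every y ∈ ℝ^n, ∫_{ℝ^n} F(x,y) dx = vol(B_R^n)² · ḡ, where vol(B_R^n) is the volume of a ball of radius R in ℝ^n and ḡ = ∫_{−1}^{1} g(t)(1−t²)^{(n−3)/2} dt / ∫_{−1}^{1} (1−t²)^{(n−3)/2} dt. -/

import Mathlib

open MeasureTheory Metric Real
open scoped BigOperators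

/-- The average `ḡ` of `g` with respect to the measure `(1 - t²)^((n-3)/2) dt` on `[-1,1]`. -/
noncomputable def sphereAvg (n : ℕ) (g : ℝ → ℝ) : ℝ :=
  (∫ t in (-1 : ℝ)..1, g t * (1 - t ^ 2) ^ (((n : ℝ) - 3) / 2)) /
    (∫ t in (-1 : ℝ)..1, (1 - t ^ 2) ^ (((n : ℝ) - 3) / 2))

open Set in
lemma cos_image_Ioo : Real.cos '' Set.Ioo 0 π = Set.Ioo (-1 : ℝ) 1 := by
  ext t
  constructor
  · rintro ⟨θ, ⟨h0, hπ⟩, rfl⟩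
    constructor
    · have := Real.strictAntiOn_cos ⟨h0.le, hπ.le⟩ (Set.right_mem_Icc.2 Real.pi_pos.le) hπ
      simpa [Real.cos_pi] using this
    · have := Real.strictAntiOn_cos (Set.left_mem_Icc.2 Real.pi_pos.le) ⟨h0.le, hπ.le⟩ h0
      simpa [Real.cos_zero] using this
  · rintro ⟨h1, h2⟩
    exact ⟨Real.arccos t, ⟨Real.arccos_pos.2 h2, by
        rw [Real.arccos_eq_pi_div_two_sub_arcsin]
        have := Real.neg_pi_div_two_lt_arcsin.2 h1
        linarith⟩,
      Real.cos_arccos h1.le h2.le⟩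

open Set in
lemma cosCOV (h : ℝ → ℝ) :
    ∫ t in Set.Ioo (-1 : ℝ) 1, h t = ∫ θ in Set.Ioo 0 π, Real.sin θ * h (Real.cos θ) := by
  rw [← cos_image_Ioo]
  rw [integral_image_eq_integral_abs_deriv_smul measurableSet_Ioo
    (fun θ _ => (Real.hasDerivAt_cos θ).hasDerivWithinAt)
    (Real.injOn_cos.mono Set.Ioo_subset_Icc_self) h]
  refine setIntegral_congr_fun measurableSet_Ioo fun θ hθ => ?_
  rw [abs_neg, abs_of_nonneg (Real.sin_nonneg_of_nonneg_of_le_pi hθ.1.le hθ.2.le)]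
  rfl

open Set in
lemma weight_integral (m : ℕ) (hm : 1 ≤ m) (G : ℝ → ℝ) :
    ∫ t in Set.Ioo (-1 : ℝ) 1, G t * (1 - t ^ 2) ^ (((m : ℝ) - 2) / 2) =
      ∫ θ in Set.Ioo 0 π, Real.sin θ ^ (m - 1) * G (Real.cos θ) := by
  rw [cosCOV]
  refine setIntegral_congr_fun measurableSet_Ioo fun θ hθ => ?_
  have hs : 0 < Real.sin θ := Real.sin_pos_of_pos_of_lt_pi hθ.1 hθ.2
  have h1 : (1 : ℝ) - Real.cos θ ^ 2 = Real.sin θ ^ 2 := by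
    have := Real.sin_sq_add_cos_sq θ; linarith
  have h2 : (Real.sin θ ^ 2 : ℝ) ^ (((m : ℝ) - 2) / 2) = Real.sin θ ^ ((m : ℝ) - 2) := by
    rw [← Real.rpow_natCast (Real.sin θ) 2, ← Real.rpow_mul hs.le]
    congr 1; ring
  have h3 : Real.sin θ * Real.sin θ ^ ((m : ℝ) - 2) = Real.sin θ ^ (m - 1 : ℕ) := by
    rw [mul_comm, ← Real.rpow_add_one hs.ne', ← Real.rpow_natCast (Real.sin θ) (m - 1)]
    congr 1
    rw [Nat.cast_sub hm]
    push_cast; ring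
  rw [h1, h2, mul_comm (G (Real.cos θ)) _, ← mul_assoc, h3]

open Set in
lemma sin_pow_pos (m : ℕ) :
    0 < ∫ θ in Set.Ioo 0 π, Real.sin θ ^ (m - 1) := by
  rw [setIntegral_pos_iff_support_of_nonneg_ae]
  · refine lt_of_lt_of_le (b := volume (Set.Ioo (0:ℝ) π)) ?_ (measure_mono ?_)
    · rw [Real.volume_Ioo]
      simpa using Real.pi_pos
    · intro θ hθ
      exact ⟨pow_ne_zero _ (Real.sin_pos_of_pos_of_lt_pi hθ.1 hθ.2).ne', hθ⟩
  · refine (ae_restrict_iff' measurableSet_Ioo).2 (Filter.Eventually.of_forall fun θ hθ => ?_)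
    exact pow_nonneg (Real.sin_nonneg_of_nonneg_of_le_pi hθ.1.le hθ.2.le) _
  · exact ((continuous_sin.pow _).continuousOn.integrableOn_Icc).mono_set Set.Ioo_subset_Icc_self

open Set in
lemma J_eq (m : ℕ) (hm : 1 ≤ m) (R : ℝ) (hR : 0 < R) (G : ℝ → ℝ) (hGc : Continuous G)
    (C : ℝ) (hC : ∀ t, |G t| ≤ C) :
    ∫ u : EuclideanSpace ℝ (Fin (m+1)), (if ‖u‖ ≤ R then G (‖u‖⁻¹ * u 0) else 0) =
      ((m : ℝ) * (volume (ball (0 : EuclideanSpace ℝ (Fin m)) 1)).toReal) *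
        (R ^ (m+1) / (m+1)) * ∫ θ in Set.Ioo 0 π, Real.sin θ ^ (m-1) * G (Real.cos θ) := by
  obtain ⟨k, rfl⟩ : ∃ k, m = k + 1 := ⟨m - 1, by omega⟩
  set m := k + 1
  have hC0 : 0 ≤ C := le_trans (abs_nonneg _) (hC 0)
  -- the two-variable kernel
  set ψ : ℝ → ℝ → ℝ := fun t r => if r ≤ R then G (r⁻¹ * t) else 0 with hψ
  have hψ_bdd : ∀ t r, |ψ t r| ≤ C := by
    intro t r
    simp only [hψ]
    split
    · exact hC _
    · simpa using hC0
  -- step a : transport to the pi type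
  have ha : ∫ u : EuclideanSpace ℝ (Fin (m+1)), (if ‖u‖ ≤ R then G (‖u‖⁻¹ * u 0) else 0) =
      ∫ f : Fin (m+1) → ℝ, ψ (f 0) (Real.sqrt (∑ i, f i ^ 2)) := by
    rw [← ((EuclideanSpace.volume_preserving_symm_measurableEquiv_toLp (Fin (m+1))).symm _ |>.integral_comp
      (MeasurableEquiv.measurableEmbedding _) (fun u => if ‖u‖ ≤ R then G (‖u‖⁻¹ * u 0) else 0))]
    refine integral_congr_ae (Filter.Eventually.of_forall fun f => ?_)
    have h1 : ∀ i, ((MeasurableEquiv.toLp 2 (Fin (m+1) → ℝ)).symm.symm f) i = f i := fun i => rfl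
    have h2 : ‖(MeasurableEquiv.toLp 2 (Fin (m+1) → ℝ)).symm.symm f‖ =
        Real.sqrt (∑ i, f i ^ 2) := by
      rw [EuclideanSpace.norm_eq]
      congr 1
      refine Finset.sum_congr rfl fun i _ => ?_
      rw [h1, Real.norm_eq_abs, sq_abs]
    simp only [h1, h2, hψ]
  -- step b : split off the first coordinate
  have hb : ∫ f : Fin (m+1) → ℝ, ψ (f 0) (Real.sqrt (∑ i, f i ^ 2)) =
      ∫ p : ℝ × (Fin m → ℝ), ψ p.1 (Real.sqrt (p.1 ^ 2 + ∑ j, p.2 j ^ 2)) := by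
    rw [volume_pi, Measure.volume_eq_prod, volume_pi]
    rw [← ((measurePreserving_piFinSuccAbove (fun _ : Fin (m+1) => (volume : Measure ℝ)) 0).symm
      _ |>.integral_comp (MeasurableEquiv.measurableEmbedding _)
      (fun f => ψ (f 0) (Real.sqrt (∑ i, f i ^ 2))))]
    refine integral_congr_ae (Filter.Eventually.of_forall fun p => ?_)
    have h0 : ((MeasurableEquiv.piFinSuccAbove (fun _ : Fin (m+1) => ℝ) 0).symm p) 0 = p.1 :=
by
      simp [MeasurableEquiv.piFinSuccAbove]
    have hsum : ∑ i, ((MeasurableEquiv.piFinSuccAbove (fun _ : Fin (m+1) => ℝ) 0).symm p) i ^ 2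
        = p.1 ^ 2 + ∑ j, p.2 j ^ 2 := by
      rw [Fin.sum_univ_succAbove
        (fun i => ((MeasurableEquiv.piFinSuccAbove (fun _ : Fin (m+1) => ℝ) 0).symm p) i ^ 2) 0]
      simp [MeasurableEquiv.piFinSuccAbove, h0]
    simp only []
    rw [h0, hsum]
  -- kernel on the product space
  set K : ℝ × (Fin m → ℝ) → ℝ := fun p => ψ p.1 (Real.sqrt (p.1 ^ 2 + ∑ j, p.2 j ^ 2)) with hK
  have hψm : Measurable (fun q : ℝ × ℝ => ψ q.1 q.2) := by
    refine Measurable.ite (measurableSet_le measurable_snd measurable_const) ?_ measurable_const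
    exact hGc.measurable.comp (measurable_snd.inv.mul measurable_fst)
  have hKm : Measurable K := by
    refine hψm.comp (measurable_fst.prodMk ?_)
    refine (measurable_fst.pow_const 2 |>.add ?_).sqrt
    exact Finset.measurable_sum _ fun j _ => ((measurable_pi_apply j).comp measurable_snd).pow_const 2
  have hKint : Integrable K := by
    set S : Set (ℝ × (Fin m → ℝ)) := Set.Icc (-R) R ×ˢ closedBall (0 : Fin m → ℝ) R with hS
    have hSm : MeasurableSet S := measurableSet_Icc.prod measurableSet_closedBall
    have hSfin : volume S < ⊤ := by
      rw [hS, Measure.volume_eq_prod, Measure.prod_prod]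
      exact ENNReal.mul_lt_top (by rw [Real.volume_Icc]; exact ENNReal.ofReal_lt_top)
        (isCompact_closedBall _ _).measure_lt_top
    refine Integrable.mono' (g := S.indicator fun _ => C) ((integrable_indicator_iff hSm).2 ?_) hKm.aestronglyMeasurable
      (Filter.Eventually.of_forall fun p => ?_)
    · exact integrableOn_const hSfin.ne
    · by_cases hp : Real.sqrt (p.1 ^ 2 + ∑ j, p.2 j ^ 2) ≤ R
      · have hsum_nonneg : (0:ℝ) ≤ ∑ j, p.2 j ^ 2 := Finset.sum_nonneg fun j _ => sq_nonneg _
        have hmem : p ∈ S := by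
          constructor
          · rw [Set.mem_Icc, ← abs_le, ← Real.sqrt_sq_eq_abs]
            exact le_trans (Real.sqrt_le_sqrt (by linarith [sq_nonneg p.1])) hp
          · rw [mem_closedBall, dist_zero_right]
            refine (pi_norm_le_iff_of_nonneg (le_trans (Real.sqrt_nonneg _) hp)).2 fun j => ?_
            rw [Real.norm_eq_abs, ← Real.sqrt_sq_eq_abs]
            refine le_trans (Real.sqrt_le_sqrt ?_) hp
            have h5 := Finset.single_le_sum (f := fun j => p.2 j ^ 2)
              (fun j _ => sq_nonneg _) (Finset.mem_univ j)
            linarith [sq_nonneg p.1]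
        rw [Set.indicator_of_mem hmem]
        exact le_trans (le_of_eq rfl) (hψ_bdd _ _)
      · have : K p = 0 := by simp only [hK, hψ]; rw [if_neg hp]
        rw [this]
        simp only [norm_zero]
        exact Set.indicator_apply_nonneg fun _ => hC0
  -- step c : Fubini
  have hc : ∫ p : ℝ × (Fin m → ℝ), K p = ∫ t : ℝ, ∫ v : Fin m → ℝ, K (t, v) := by
    rw [Measure.volume_eq_prod] at hKint ⊢
    exact integral_prod K hKint
  -- step d : inner integral via polar radius
  haveI : Nontrivial (EuclideanSpace ℝ (Fin m)) := ⟨EuclideanSpace.single 0 1, 0, by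
    intro h
    have := congrArg (fun v => v (0 : Fin m)) h
    simp [EuclideanSpace.single_apply] at this⟩
  set Vm : ℝ := (volume (ball (0 : EuclideanSpace ℝ (Fin m)) 1)).toReal with hVm
  have hd : ∀ t : ℝ, (∫ v : Fin m → ℝ, K (t, v)) =
      ((m : ℝ) * Vm) * ∫ r in Set.Ioi (0:ℝ), r ^ (m - 1) • ψ t (Real.sqrt (t ^ 2 + r ^ 2)) := by
    intro t
    have e1 : (∫ v : Fin m → ℝ, K (t, v)) =
        ∫ w : EuclideanSpace ℝ (Fin m), ψ t (Real.sqrt (t ^ 2 + ‖w‖ ^ 2)) := by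
      rw [← ((EuclideanSpace.volume_preserving_symm_measurableEquiv_toLp (Fin m)).integral_comp
        (MeasurableEquiv.measurableEmbedding _) (fun v => K (t, v)))]
      refine integral_congr_ae (Filter.Eventually.of_forall fun w => ?_)
      have h2 : ∑ j, ((MeasurableEquiv.toLp 2 (Fin m → ℝ)).symm w) j ^ 2 = ‖w‖ ^ 2 := by
        rw [EuclideanSpace.norm_eq, Real.sq_sqrt (Finset.sum_nonneg fun j _ => sq_nonneg _)]
        exact Finset.sum_congr rfl fun j _ => by rw [Real.norm_eq_abs, sq_abs]; rfl
      simp only [hK]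
      rw [h2]
    rw [e1]
    have := MeasureTheory.integral_fun_norm_addHaar (volume : Measure (EuclideanSpace ℝ (Fin m)))
      (fun r => ψ t (Real.sqrt (t ^ 2 + r ^ 2)))
    rw [finrank_euclideanSpace_fin] at this
    rw [this, nsmul_eq_mul, smul_eq_mul, mul_assoc]
    rfl
  -- step f : extend the radial integral to ℝ
  set Qu : ℝ × ℝ → ℝ := fun p =>
    if 0 < p.2 then p.2 ^ (m - 1) * ψ p.1 (Real.sqrt (p.1 ^ 2 + p.2 ^ 2)) else 0 with hQu
  have hfQ : ∀ t : ℝ, (∫ r in Set.Ioi (0:ℝ), r ^ (m - 1) • ψ t (Real.sqrt (t ^ 2 + r ^ 2))) =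
      ∫ r : ℝ, Qu (t, r) := by
    intro t
    rw [← integral_indicator measurableSet_Ioi]
    refine integral_congr_ae (Filter.Eventually.of_forall fun r => ?_)
    simp only [Set.indicator_apply, Set.mem_Ioi, hQu, smul_eq_mul]
  -- integrability of Qu
  have hQum : Measurable Qu := by
    refine Measurable.ite (measurableSet_lt measurable_const measurable_snd) ?_ measurable_const
    refine (measurable_snd.pow_const _).mul (hψm.comp (measurable_fst.prodMk ?_))
    exact ((measurable_fst.pow_const 2).add (measurable_snd.pow_const 2)).sqrt
  have hQuint : Integrable Qu := by
    set S2 : Set (ℝ × ℝ) := Set.Icc (-R) R ×ˢ Set.Icc 0 R with hS2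
    have hS2m : MeasurableSet S2 := measurableSet_Icc.prod measurableSet_Icc
    have hS2fin : volume S2 < ⊤ := by
      rw [hS2, Measure.volume_eq_prod, Measure.prod_prod]
      exact ENNReal.mul_lt_top (by rw [Real.volume_Icc]; exact ENNReal.ofReal_lt_top)
        (by rw [Real.volume_Icc]; exact ENNReal.ofReal_lt_top)
    refine Integrable.mono' (g := S2.indicator fun _ => R ^ (m-1) * C)
      ((integrable_indicator_iff hS2m).2 (integrableOn_const hS2fin.ne))
      hQum.aestronglyMeasurable (Filter.Eventually.of_forall fun p => ?_)
    by_cases hp2 : 0 < p.2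
    · by_cases hp : Real.sqrt (p.1 ^ 2 + p.2 ^ 2) ≤ R
      · have hab : |p.1| ≤ R := by
          rw [← Real.sqrt_sq_eq_abs]
          exact le_trans (Real.sqrt_le_sqrt (by linarith [sq_nonneg p.2])) hp
        have hrb : p.2 ≤ R := by
          have : |p.2| ≤ R := by
            rw [← Real.sqrt_sq_eq_abs]
            exact le_trans (Real.sqrt_le_sqrt (by linarith [sq_nonneg p.1])) hp
          exact le_trans (le_abs_self _) this
        have hmem : p ∈ S2 := ⟨Set.mem_Icc.2 (abs_le.1 hab), Set.mem_Icc.2 ⟨hp2.le, hrb⟩⟩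
        rw [Set.indicator_of_mem hmem]
        have : Qu p = p.2 ^ (m-1) * ψ p.1 (Real.sqrt (p.1 ^ 2 + p.2 ^ 2)) := if_pos hp2
        rw [Real.norm_eq_abs, this, abs_mul, abs_pow]
        refine mul_le_mul (pow_le_pow_left₀ (abs_nonneg _) (abs_le.2 ⟨by linarith, hrb⟩) _)
          (hψ_bdd _ _) (abs_nonneg _) (pow_nonneg hR.le _)
      · have : Qu p = 0 := by
          simp only [hQu, hψ]
          rw [if_pos hp2, if_neg hp, mul_zero]
        rw [this, norm_zero]
        exact Set.indicator_apply_nonneg fun _ => mul_nonneg (pow_nonneg hR.le _) hC0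
    · have : Qu p = 0 := if_neg hp2
      rw [this, norm_zero]
      exact Set.indicator_apply_nonneg fun _ => mul_nonneg (pow_nonneg hR.le _) hC0
  -- step g : back to a double integral and polar coordinates
  have hg : ∫ t : ℝ, ∫ r : ℝ, Qu (t, r) = ∫ p : ℝ × ℝ, Qu p := by
    rw [Measure.volume_eq_prod] at hQuint ⊢
    rw [integral_integral hQuint]
  set A : ℝ → ℝ := Set.Ioc 0 R |>.indicator fun ρ => ρ ^ m with hA
  set B : ℝ → ℝ := Set.Ioo 0 π |>.indicator fun θ => Real.sin θ ^ (m-1) * G (Real.cos θ) with hB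
  have hpolar : ∫ p : ℝ × ℝ, Qu p = ∫ p : ℝ × ℝ, A p.1 * B p.2 := by
    rw [← integral_comp_polarCoord_symm Qu]
    rw [setIntegral_congr_fun (polarCoord.open_target.measurableSet) (g := fun p => A p.1 * B p.2) ?_]
    · refine setIntegral_eq_integral_of_forall_compl_eq_zero fun p hp => ?_
      rw [show polarCoord.target = Set.Ioi (0:ℝ) ×ˢ Set.Ioo (-π) π from rfl] at hp
      simp only [Set.mem_prod, not_and_or] at hp
      rcases hp with hp | hp
      · rw [hA, Set.indicator_of_notMem (fun hc => hp hc.1), zero_mul]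
      · have : p.2 ∉ Set.Ioo 0 π := fun hc => hp ⟨lt_trans (neg_neg_iff_pos.2 Real.pi_pos) hc.1, hc.2⟩
        rw [hB, Set.indicator_of_notMem this, mul_zero]
    · intro p hp
      rw [show polarCoord.target = Set.Ioi (0:ℝ) ×ˢ Set.Ioo (-π) π from rfl] at hp
      obtain ⟨hρ, hθ⟩ := hp
      rw [Set.mem_Ioi] at hρ
      simp only [polarCoord_symm_apply]
      by_cases hθ2 : p.2 ∈ Set.Ioo 0 π
      · have hsθ : 0 < Real.sin p.2 := Real.sin_pos_of_pos_of_lt_pi hθ2.1 hθ2.2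
        have hrs : 0 < p.1 * Real.sin p.2 := mul_pos hρ hsθ
        have hsq : (p.1 * Real.cos p.2) ^ 2 + (p.1 * Real.sin p.2) ^ 2 = p.1 ^ 2 := by
          have h := Real.sin_sq_add_cos_sq p.2
          ring_nf
          nlinarith [h]
        have hQv : Qu (p.1 * Real.cos p.2, p.1 * Real.sin p.2) =
            (p.1 * Real.sin p.2) ^ (m-1) * (if p.1 ≤ R then G (Real.cos p.2) else 0) := by
          simp only [hQu, hψ]
          rw [if_pos hrs, hsq, Real.sqrt_sq hρ.le]
          congr 1
          split
          · rw [inv_mul_cancel_left₀ hρ.ne']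
          · rfl
        rw [hQv, hB, Set.indicator_of_mem hθ2]
        by_cases hρR : p.1 ≤ R
        · rw [if_pos hρR, hA, Set.indicator_of_mem (Set.mem_Ioc.2 ⟨hρ, hρR⟩)]
          have hm1 : m - 1 = k := rfl
          rw [hm1]
          show p.1 * ((p.1 * Real.sin p.2) ^ k * G (Real.cos p.2)) =
            p.1 ^ (k+1) * (Real.sin p.2 ^ k * G (Real.cos p.2))
          rw [mul_pow, pow_succ]
          ring
        · rw [if_neg hρR, hA, Set.indicator_of_notMem (fun hc => hρR hc.2)]
          simp
      · have hsθ : Real.sin p.2 ≤ 0 := by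
          have h0 : p.2 ≤ 0 := by
            by_contra hc
            exact hθ2 ⟨lt_of_not_ge hc, hθ.2⟩
          exact Real.sin_nonpos_of_nonpos_of_neg_pi_le h0 hθ.1.le
        have : Qu (p.1 * Real.cos p.2, p.1 * Real.sin p.2) = 0 := by
          refine if_neg (not_lt.2 ?_)
          exact mul_nonpos_of_nonneg_of_nonpos hρ.le hsθ
        rw [this, smul_zero, hB, Set.indicator_of_notMem hθ2, mul_zero]
  have hAint : ∫ ρ : ℝ, A ρ = R ^ (m+1) / (m+1) := by
    rw [hA, integral_indicator measurableSet_Ioc, ← intervalIntegral.integral_of_le hR.le,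
      integral_pow]
    norm_num
  have hBint : ∫ θ : ℝ, B θ = ∫ θ in Set.Ioo 0 π, Real.sin θ ^ (m-1) * G (Real.cos θ) := by
    rw [hB, integral_indicator measurableSet_Ioo]
  -- assemble
  rw [ha, hb, hc]
  have hstep : (fun t : ℝ => ∫ v : Fin m → ℝ, K (t, v)) =
      fun t : ℝ => ((m : ℝ) * Vm) * ∫ r : ℝ, Qu (t, r) := by
    funext t
    rw [hd t, hfQ t]
  rw [hstep, integral_const_mul, hg, hpolar, Measure.volume_eq_prod, integral_prod_mul A B,
    hAint, hBint]
  push_cast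
  ring

theorem kernel_integral_eq_vol_sq_mul_avg
    (n : ℕ) (hn : 2 ≤ n) (R : ℝ) (hR : 0 < R)
    (g : ℝ → ℝ) (hg_cont : ContinuousOn g (Set.Icc (-1) 1))
    (F : EuclideanSpace ℝ (Fin n) → EuclideanSpace ℝ (Fin n) → ℝ)
    (hF : ∀ x y, F x y = ∫ z in closedBall x R ∩ closedBall y R,
      g (inner ℝ (‖x - z‖⁻¹ • (x - z)) (‖y - z‖⁻¹ • (y - z)))) :
    ∀ y : EuclideanSpace ℝ (Fin n),
      ∫ x, F x y =
        (volume (closedBall (0 : EuclideanSpace ℝ (Fin n)) R)).toReal ^ 2 * sphereAvg n g := by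
  obtain ⟨m, rfl⟩ : ∃ m, n = m + 1 := ⟨n - 1, by omega⟩
  have hm : 1 ≤ m := by omega
  intro y
  -- clamped version of g
  have hclamp : ∀ t : ℝ, max (-1) (min 1 t) ∈ Set.Icc (-1 : ℝ) 1 :=
    fun t => ⟨le_max_left _ _, max_le (by norm_num) (min_le_left _ _)⟩
  set G : ℝ → ℝ := fun t => g (max (-1) (min 1 t)) with hG
  have hGc : Continuous G := hg_cont.comp_continuous
    (continuous_const.max (continuous_const.min continuous_id)) hclamp
  have hGeq : ∀ t ∈ Set.Icc (-1 : ℝ) 1, G t = g t := by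
    intro t ht
    rw [hG]
    simp only
    rw [min_eq_right ht.2, max_eq_right ht.1]
  obtain ⟨t₀, ht₀, hmax⟩ :=
    isCompact_Icc.exists_isMaxOn (⟨-1, by norm_num, by norm_num⟩ : Set.Nonempty (Set.Icc (-1:ℝ) 1))
      hg_cont.abs
  set C : ℝ := |g t₀| with hCdef
  have hC : ∀ t, |G t| ≤ C := fun t => hmax (hclamp t)
  have hC0 : 0 ≤ C := abs_nonneg _
  -- the inner product of the two normalized vectors lies in [-1, 1]
  have hunit : ∀ c : EuclideanSpace ℝ (Fin (m+1)), ‖‖c‖⁻¹ • c‖ ≤ 1 := by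
    intro c
    rcases eq_or_ne c 0 with rfl | hc
    · simp
    · rw [norm_smul, norm_inv, norm_norm, inv_mul_cancel₀ (norm_ne_zero_iff.2 hc)]
  have hval : ∀ a b : EuclideanSpace ℝ (Fin (m+1)),
      (inner ℝ (‖a‖⁻¹ • a) (‖b‖⁻¹ • b) : ℝ) ∈ Set.Icc (-1 : ℝ) 1 := by
    intro a b
    rw [Set.mem_Icc, ← abs_le]
    calc |(inner ℝ (‖a‖⁻¹ • a) (‖b‖⁻¹ • b) : ℝ)| ≤ ‖‖a‖⁻¹ • a‖ * ‖‖b‖⁻¹ • b‖ :=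
          abs_real_inner_le_norm _ _
      _ ≤ 1 * 1 := mul_le_mul (hunit a) (hunit b) (norm_nonneg _) zero_le_one
      _ = 1 := one_mul 1
  -- two-variable kernel
  set W : EuclideanSpace ℝ (Fin (m+1)) × EuclideanSpace ℝ (Fin (m+1)) → ℝ := fun p =>
    if dist p.2 p.1 ≤ R ∧ dist p.2 y ≤ R then
      G (inner ℝ (‖p.1 - p.2‖⁻¹ • (p.1 - p.2)) (‖y - p.2‖⁻¹ • (y - p.2))) else 0 with hW
  have hFW : ∀ x, F x y = ∫ z, W (x, z) := by
    intro x
    rw [hF x y, ← integral_indicator (measurableSet_closedBall.inter measurableSet_closedBall)]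
    refine integral_congr_ae (Filter.Eventually.of_forall fun z => ?_)
    classical
    rw [Set.indicator_apply, hW]
    simp only [Set.mem_inter_iff, mem_closedBall]
    split_ifs with h1
    · exact (hGeq _ (hval _ _)).symm
    · rfl
  classical
  -- measurability of W
  have hunitm : Measurable (fun v : EuclideanSpace ℝ (Fin (m+1)) => ‖v‖⁻¹ • v) :=
    measurable_norm.inv.smul measurable_id
  have hWm : Measurable W := by
    have hcond : MeasurableSet {p : EuclideanSpace ℝ (Fin (m+1)) × EuclideanSpace ℝ (Fin (m+1)) |
        dist p.2 p.1 ≤ R ∧ dist p.2 y ≤ R} := by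
      refine MeasurableSet.inter ?_ ?_
      · exact measurableSet_le (measurable_snd.dist measurable_fst) measurable_const
      · exact measurableSet_le (measurable_snd.dist measurable_const) measurable_const
    refine Measurable.ite hcond ?_ measurable_const
    refine hGc.measurable.comp (Measurable.inner ?_ ?_)
    · exact hunitm.comp (measurable_fst.sub measurable_snd)
    · exact hunitm.comp (measurable_const.sub measurable_snd)
  -- integrability of W
  have hWint : Integrable W := by
    set S : Set (EuclideanSpace ℝ (Fin (m+1)) × EuclideanSpace ℝ (Fin (m+1))) :=
      closedBall y (2*R) ×ˢ closedBall y R with hS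
    have hSm : MeasurableSet S := measurableSet_closedBall.prod measurableSet_closedBall
    have hSfin : volume S < ⊤ := by
      rw [hS, Measure.volume_eq_prod, Measure.prod_prod]
      exact ENNReal.mul_lt_top (isCompact_closedBall _ _).measure_lt_top
        (isCompact_closedBall _ _).measure_lt_top
    refine Integrable.mono' (g := S.indicator fun _ => C)
      ((integrable_indicator_iff hSm).2 (integrableOn_const hSfin.ne))
      hWm.aestronglyMeasurable (Filter.Eventually.of_forall fun p => ?_)
    by_cases hcnd : dist p.2 p.1 ≤ R ∧ dist p.2 y ≤ R
    · have hmem : p ∈ S := by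
        refine ⟨mem_closedBall.2 ?_, mem_closedBall.2 hcnd.2⟩
        calc dist p.1 y ≤ dist p.1 p.2 + dist p.2 y := dist_triangle _ _ _
          _ ≤ R + R := add_le_add (by rw [dist_comm]; exact hcnd.1) hcnd.2
          _ = 2 * R := by ring
      rw [Set.indicator_of_mem hmem]
      have : W p = G (inner ℝ (‖p.1 - p.2‖⁻¹ • (p.1 - p.2)) (‖y - p.2‖⁻¹ • (y - p.2))) := if_pos hcnd
      rw [Real.norm_eq_abs, this]
      exact hC _
    · have : W p = 0 := if_neg hcnd
      rw [this, norm_zero]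
      exact Set.indicator_apply_nonneg fun _ => hC0
  -- Fubini swap
  have hswap : ∫ x, ∫ z, W (x, z) = ∫ z, ∫ x, W (x, z) := by
    apply integral_integral_swap
    rwa [Measure.volume_eq_prod] at hWint
  -- the rotation-invariant integral
  set J : ℝ := ∫ u : EuclideanSpace ℝ (Fin (m+1)), (if ‖u‖ ≤ R then G (‖u‖⁻¹ * u 0) else 0)
    with hJ
  have hrot : ∀ w : EuclideanSpace ℝ (Fin (m+1)), ‖w‖ = 1 →
      (∫ u : EuclideanSpace ℝ (Fin (m+1)),
        (if ‖u‖ ≤ R then G (inner ℝ (‖u‖⁻¹ • u) w) else 0)) = J := by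
    intro w hw
    set e₀ : EuclideanSpace ℝ (Fin (m+1)) := EuclideanSpace.single 0 1 with he₀
    have he0n : ‖e₀‖ = 1 := by rw [he₀, EuclideanSpace.norm_single, norm_one]
    set T := Submodule.reflection (ℝ ∙ (w - e₀))ᗮ with hT
    have hTe : T w = e₀ := Submodule.reflection_sub (by rw [he0n, hw])
    have hmp : MeasurePreserving T volume volume :=
      LinearIsometryEquiv.measurePreserving (T : EuclideanSpace ℝ (Fin (m+1)) ≃ₗᵢ[ℝ]
        EuclideanSpace ℝ (Fin (m+1)))
    rw [hJ, ← hmp.integral_comp (T : EuclideanSpace ℝ (Fin (m+1)) ≃ₗᵢ[ℝ]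
        EuclideanSpace ℝ (Fin (m+1))).toHomeomorph.measurableEmbedding
        (fun u => if ‖u‖ ≤ R then G (‖u‖⁻¹ * u 0) else 0)]
    refine integral_congr_ae (Filter.Eventually.of_forall fun u => ?_)
    have hnorm : ‖T u‖ = ‖u‖ := T.norm_map u
    have hin : (inner ℝ (‖u‖⁻¹ • u) w : ℝ) = ‖T u‖⁻¹ * (T u) 0 := by
      calc (inner ℝ (‖u‖⁻¹ • u) w : ℝ) = inner ℝ (T (‖u‖⁻¹ • u)) (T w) :=
            (T.inner_map_map _ _).symm
        _ = inner ℝ (T (‖u‖⁻¹ • u)) e₀ := by rw [hTe]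
        _ = (T (‖u‖⁻¹ • u)) 0 := by rw [he₀, EuclideanSpace.inner_single_right]; simp
        _ = ‖T u‖⁻¹ * (T u) 0 := by rw [_root_.map_smul, hnorm]; rfl
    simp only [hnorm, hin]
  -- computing the inner integral for a.e. z
  have hinner : ∀ z : EuclideanSpace ℝ (Fin (m+1)), z ≠ y →
      (∫ x, W (x, z)) = Set.indicator (closedBall y R) (fun _ => J) z := by
    intro z hz
    by_cases hzy : dist z y ≤ R
    · rw [Set.indicator_of_mem (mem_closedBall.2 hzy)]
      set w : EuclideanSpace ℝ (Fin (m+1)) := ‖y - z‖⁻¹ • (y - z) with hwdef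
      have hyz : y - z ≠ 0 := sub_ne_zero.2 (Ne.symm hz)
      have hwn : ‖w‖ = 1 := by
        rw [hwdef, norm_smul, norm_inv, norm_norm, inv_mul_cancel₀ (norm_ne_zero_iff.2 hyz)]
      set φ : EuclideanSpace ℝ (Fin (m+1)) → ℝ := fun u =>
        if ‖u‖ ≤ R then G (inner ℝ (‖u‖⁻¹ • u) w) else 0 with hφ
      have hWz : ∀ x, W (x, z) = φ (x - z) := by
        intro x
        have hcnd : (dist z x ≤ R ∧ dist z y ≤ R) ↔ ‖x - z‖ ≤ R := by
          rw [dist_comm, dist_eq_norm]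
          exact and_iff_left hzy
        rw [hW, hφ]
        simp only
        rw [if_congr hcnd rfl rfl]
      calc ∫ x, W (x, z) = ∫ x, φ (x - z) :=
            integral_congr_ae (Filter.Eventually.of_forall fun x => hWz x)
        _ = ∫ u, φ u := integral_sub_right_eq_self φ z
        _ = J := hrot w hwn
    · have : (fun x => W (x, z)) = fun _ => (0:ℝ) :=
        funext fun x => if_neg (fun hc => hzy hc.2)
      rw [this, integral_zero, Set.indicator_of_notMem (fun hc => hzy (mem_closedBall.1 hc))]
  -- almost every z differs from y
  have hae : ∀ᵐ z : EuclideanSpace ℝ (Fin (m+1)), z ≠ y := by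
    rw [ae_iff]
    have : {z : EuclideanSpace ℝ (Fin (m+1)) | ¬z ≠ y} = {y} := by
      ext z; simp
    rw [this]
    exact measure_singleton y
  -- main chain
  have hmain : ∫ x, F x y = (volume (closedBall (0 : EuclideanSpace ℝ (Fin (m+1))) R)).toReal * J := by
    calc ∫ x, F x y = ∫ x, ∫ z, W (x, z) :=
          integral_congr_ae (Filter.Eventually.of_forall fun x => hFW x)
      _ = ∫ z, ∫ x, W (x, z) := hswap
      _ = ∫ z, Set.indicator (closedBall y R) (fun _ => J) z :=
          integral_congr_ae (hae.mono fun z hz => hinner z hz)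
      _ = (volume (closedBall y R)).toReal • J := by
          rw [integral_indicator_const _ measurableSet_closedBall]
          rfl
      _ = (volume (closedBall (0 : EuclideanSpace ℝ (Fin (m+1))) R)).toReal * J := by
          rw [smul_eq_mul, Measure.addHaar_closedBall_center]
  -- the two weighted integrals
  set WG : ℝ := ∫ θ in Set.Ioo 0 π, Real.sin θ ^ (m-1) * G (Real.cos θ) with hWG
  set W1 : ℝ := ∫ θ in Set.Ioo 0 π, Real.sin θ ^ (m-1) with hW1
  set Vm : ℝ := (volume (ball (0 : EuclideanSpace ℝ (Fin m)) 1)).toReal with hVm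
  set cK : ℝ := ((m : ℝ) * Vm) * (R ^ (m+1) / (m+1)) with hcK
  have hJval : J = cK * WG := J_eq m hm R hR G hGc C hC
  have hW1pos : 0 < W1 := sin_pow_pos m
  have hvol : (volume (closedBall (0 : EuclideanSpace ℝ (Fin (m+1))) R)).toReal = cK * W1 := by
    have h1 := J_eq m hm R hR (fun _ => (1:ℝ)) continuous_const 1 (by norm_num)
    have h2 : (fun u : EuclideanSpace ℝ (Fin (m+1)) => if ‖u‖ ≤ R then (1:ℝ) else 0) =
        (closedBall (0 : EuclideanSpace ℝ (Fin (m+1))) R).indicator (fun _ => 1) :=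
      funext fun u => by rw [Set.indicator_apply, mem_closedBall, dist_zero_right]
    have h3 : ∫ θ in Set.Ioo 0 π, Real.sin θ ^ (m-1) * (fun _ : ℝ => (1:ℝ)) (Real.cos θ) = W1 := by
      rw [hW1]
      refine setIntegral_congr_fun measurableSet_Ioo fun θ _ => ?_
      simp
    calc (volume (closedBall (0 : EuclideanSpace ℝ (Fin (m+1))) R)).toReal
        = ∫ u : EuclideanSpace ℝ (Fin (m+1)),
            (closedBall (0 : EuclideanSpace ℝ (Fin (m+1))) R).indicator (fun _ => (1:ℝ)) u := by
          rw [integral_indicator_const _ measurableSet_closedBall, smul_eq_mul, mul_one]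
          rfl
      _ = ∫ u : EuclideanSpace ℝ (Fin (m+1)), (if ‖u‖ ≤ R then (1:ℝ) else 0) := by rw [← h2]
      _ = cK * W1 := by rw [h1, h3]
  -- identify sphereAvg
  have hexp : (((m+1 : ℕ) : ℝ) - 3)/2 = ((m:ℝ)-2)/2 := by push_cast; ring
  have hnum : (∫ t in (-1:ℝ)..1, g t * (1 - t^2) ^ ((((m+1 : ℕ) : ℝ) - 3)/2)) = WG := by
    rw [intervalIntegral.integral_of_le (by norm_num : (-1:ℝ) ≤ 1),
      MeasureTheory.integral_Ioc_eq_integral_Ioo, hWG, ← weight_integral m hm G]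
    refine setIntegral_congr_fun measurableSet_Ioo fun t ht => ?_
    rw [hGeq t ⟨ht.1.le, ht.2.le⟩, hexp]
  have hden : (∫ t in (-1:ℝ)..1, (1 - t^2) ^ ((((m+1 : ℕ) : ℝ) - 3)/2)) = W1 := by
    rw [intervalIntegral.integral_of_le (by norm_num : (-1:ℝ) ≤ 1),
      MeasureTheory.integral_Ioc_eq_integral_Ioo]
    have h4 := weight_integral m hm (fun _ => (1:ℝ))
    simp only [one_mul, mul_one] at h4
    rw [hW1, ← h4]
    refine setIntegral_congr_fun measurableSet_Ioo fun t ht => ?_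
    rw [hexp]
  have havg : sphereAvg (m+1) g = WG / W1 := by
    rw [sphereAvg, hnum, hden]
  rw [hmain, hJval, hvol, havg]
  field_simp
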